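/- For every n ≥ 2, ∫₀¹ [C^{(2)}_{n−2}(x)]² dx = n⁴/16 + ((4n² − 1)/64)·(ψ(n + 1/2) + γ + log 4) − (5/32)·n². -/

import Mathlib

open Polynomial Real

/-- The digamma function `ψ(x) = d/dx log Γ(x)`. -/
noncomputable def digamma (x : ℝ) : ℝ := deriv (fun y => Real.log (Real.Gamma y)) x

/-- The Gegenbauer polynomial of index 2, defined by `2 C²ₙ(x) = d/dx U_{n+1}(x)`. -/
noncomputable def gegenbauer2 (n : ℕ) : Polynomial ℝ :=
  Polynomial.C (1 / 2 : ℝ) * Polynomial.derivative (Polynomial.Chebyshev.U ℝ (n + 1))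

namespace GegenbauerAux

open Polynomial.Chebyshev intervalIntegral MeasureTheory



lemma digamma_rec (x : ℝ) (hx : 0 < x) : digamma (x + 1) = digamma x + 1 / x := by
  have h_rec (y : ℝ) (hy : 0 < y) :
      Real.log (Real.Gamma (y + 1)) = Real.log (Real.Gamma y) + Real.log y := by
    rw [Real.Gamma_add_one hy.ne', Real.log_mul hy.ne' (Real.Gamma_pos_of_pos hy).ne', add_comm]
  have hder {y : ℝ} (hy : 0 < y) :
      DifferentiableAt ℝ (fun t => Real.log (Real.Gamma t)) y := by
    refine ((Real.differentiableAt_Gamma ?_).log (Real.Gamma_ne_zero ?_)) <;>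
      exact fun m => ne_of_gt (lt_of_le_of_lt (neg_nonpos.mpr m.cast_nonneg) hy)
  unfold digamma
  rw [← deriv_comp_add_const, one_div, ← Real.deriv_log,
    ← deriv_add (hder hx) (Real.differentiableAt_log hx.ne')]
  apply Filter.EventuallyEq.deriv_eq
  filter_upwards [eventually_gt_nhds hx] using h_rec

lemma digamma_half : digamma (1 / 2) = -(Real.eulerMascheroniConstant + 2 * Real.log 2) := by
  have h := (Real.hasDerivAt_Gamma_one_half.log
    (Real.Gamma_pos_of_pos (by norm_num)).ne').deriv
  unfold digamma
  rw [h, Real.Gamma_one_half_eq]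
  have : (Real.sqrt π) ≠ 0 := ne_of_gt (Real.sqrt_pos.mpr Real.pi_pos)
  field_simp

lemma digamma_nat_half (n : ℕ) :
    digamma ((n : ℝ) + 1 / 2) + Real.eulerMascheroniConstant + Real.log 4
      = 2 * ∑ k ∈ Finset.range n, (1 : ℝ) / (2 * k + 1) := by
  have hlog4 : Real.log 4 = 2 * Real.log 2 := by
    rw [show (4 : ℝ) = 2 ^ 2 by norm_num, Real.log_pow]; push_cast; ring
  induction n with
  | zero => rw [Nat.cast_zero, zero_add, digamma_half, hlog4]; simp
  | succ n ih =>
    have h : ((n + 1 : ℕ) : ℝ) + 1 / 2 = ((n : ℝ) + 1 / 2) + 1 := by push_cast; ring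
    have hpos : (0 : ℝ) < (n : ℝ) + 1 / 2 := by positivity
    rw [h, digamma_rec _ hpos, Finset.sum_range_succ, mul_add, ← ih]
    have hne : (2 * (n : ℝ) + 1) ≠ 0 := by positivity
    have e : 1 / ((n : ℝ) + 1 / 2) = 2 * ((1 : ℝ) / (2 * (n : ℝ) + 1)) := by
      field_simp
    linarith [e]



lemma U_prod (n : ℕ) (k : ℤ) :
    U ℝ ((n : ℤ) + 1) * U ℝ ((n : ℤ) + 1 + k) - U ℝ (n : ℤ) * U ℝ ((n : ℤ) + k)
      = U ℝ (2 * (n : ℤ) + 2 + k) := by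
  induction n generalizing k with
  | zero =>
    have h := U_add_two ℝ k
    simp only [Nat.cast_zero, zero_add, U_one, U_zero]
    linear_combination (norm := ring_nf) -h
  | succ n ih =>
    have h1 := U_add_two ℝ (n : ℤ)
    have h2 := U_add_two ℝ ((n : ℤ) + k)
    have h3 := U_add_two ℝ (2 * (n : ℤ) + 2 + k)
    have ih1 := ih (k + 1)
    have ih0 := ih k
    push_cast
    linear_combination (norm := ring_nf)
      (U ℝ ((n : ℤ) + 2 + k)) * h1 - (U ℝ (n : ℤ)) * h2 + 2 * (X : ℝ[X]) * ih1 - ih0 - h3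

lemma U_eval_one (n : ℕ) : (U ℝ (n : ℤ)).eval 1 = (n : ℝ) + 1 := by
  induction n using Nat.twoStepInduction with
  | zero => simp [U_zero]
  | one => simp [U_one]; norm_num
  | more n ih1 ih2 =>
    have h := U_add_two ℝ (n : ℤ)
    have : ((n + 2 : ℕ) : ℤ) = (n : ℤ) + 2 := by push_cast; ring
    have e1 : ((n + 1 : ℕ) : ℤ) = (n : ℤ) + 1 := by push_cast; ring
    rw [e1] at ih2
    rw [this, h]
    simp only [eval_sub, eval_mul, eval_ofNat, eval_X] at *
    rw [ih1, ih2]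
    push_cast; ring

lemma T_eval_one (n : ℕ) : (T ℝ (n : ℤ)).eval 1 = 1 := by
  induction n using Nat.twoStepInduction with
  | zero => simp [T_zero]
  | one => simp [T_one]
  | more n ih1 ih2 =>
    have h := T_add_two ℝ (n : ℤ)
    have : ((n + 2 : ℕ) : ℤ) = (n : ℤ) + 2 := by push_cast; ring
    have e1 : ((n + 1 : ℕ) : ℤ) = (n : ℤ) + 1 := by push_cast; ring
    rw [e1] at ih2
    rw [this, h]
    simp only [eval_sub, eval_mul, eval_ofNat, eval_X] at *
    rw [ih1, ih2]; ring

lemma T_eval_zero_odd (k : ℕ) : (T ℝ (2 * (k : ℤ) + 1)).eval 0 = 0 := by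
  induction k with
  | zero => simp [T_one]
  | succ k ih =>
    have h := T_add_two ℝ (2 * (k : ℤ) + 1)
    have e : 2 * ((k : ℤ) + 1) + 1 = 2 * (k : ℤ) + 1 + 2 := by ring
    push_cast
    rw [e, h]
    simp [ih]

lemma poly_ftc (p : ℝ[X]) :
    ∫ x in (0 : ℝ)..1, (derivative p).eval x = p.eval 1 - p.eval 0 := by
  refine integral_deriv_eq_sub' (fun x => p.eval x)
    (funext fun x => p.deriv) (fun x _ => (p.hasDerivAt x).differentiableAt)
    ((derivative p).continuous.continuousOn)

lemma int_U (m : ℕ) :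
    ∫ x in (0 : ℝ)..1, (U ℝ (2 * (m : ℤ) + 2)).eval x = 1 / (2 * (m : ℝ) + 3) := by
  have hd : derivative (T ℝ (2 * (m : ℤ) + 3))
      = ((2 * (m : ℤ) + 3 : ℤ) : ℝ[X]) * U ℝ (2 * (m : ℤ) + 2) := by
    have h := T_derivative_eq_U (R := ℝ) (2 * (m : ℤ) + 3)
    have e : 2 * (m : ℤ) + 3 - 1 = 2 * (m : ℤ) + 2 := by ring
    rw [h, e]
  have h1 : ∫ x in (0 : ℝ)..1, (derivative (T ℝ (2 * (m : ℤ) + 3))).eval x = 1 := by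
    rw [poly_ftc]
    have e1 : (2 * (m : ℤ) + 3) = ((2 * m + 3 : ℕ) : ℤ) := by push_cast; ring
    have e2 : (2 * (m : ℤ) + 3) = 2 * ((m + 1 : ℕ) : ℤ) + 1 := by push_cast; ring
    rw [show (T ℝ (2 * (m : ℤ) + 3)).eval 1 = 1 by rw [e1]; exact T_eval_one _,
      show (T ℝ (2 * (m : ℤ) + 3)).eval 0 = 0 by rw [e2]; exact T_eval_zero_odd _]
    ring
  rw [hd] at h1
  simp only [eval_mul, eval_intCast] at h1
  push_cast at h1
  rw [intervalIntegral.integral_const_mul] at h1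
  have hne : 2 * (m : ℝ) + 3 ≠ 0 := by positivity
  rw [eq_div_iff hne, mul_comm]
  exact h1

lemma U_sq (n : ℕ) :
    ∫ x in (0 : ℝ)..1, ((U ℝ (n : ℤ)).eval x) ^ 2
      = ∑ k ∈ Finset.range (n + 1), (1 : ℝ) / (2 * k + 1) := by
  induction n with
  | zero => simp [U_zero]
  | succ n ih =>
    have hid : (U ℝ ((n : ℤ) + 1)) ^ 2 = (U ℝ (n : ℤ)) ^ 2 + U ℝ (2 * (n : ℤ) + 2) := by
      have := U_prod n 0
      simp only [add_zero] at this
      linear_combination this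
    have e : ((n + 1 : ℕ) : ℤ) = (n : ℤ) + 1 := by push_cast; ring
    calc ∫ x in (0 : ℝ)..1, ((U ℝ ((n + 1 : ℕ) : ℤ)).eval x) ^ 2
        = ∫ x in (0 : ℝ)..1, (((U ℝ (n : ℤ)) ^ 2 + U ℝ (2 * (n : ℤ) + 2)).eval x) := by
          rw [e]
          congr 1; funext x
          rw [← hid, eval_pow]
      _ = (∫ x in (0 : ℝ)..1, ((U ℝ (n : ℤ)).eval x) ^ 2)
            + ∫ x in (0 : ℝ)..1, (U ℝ (2 * (n : ℤ) + 2)).eval x := by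
          simp only [eval_add, eval_pow]
          exact intervalIntegral.integral_add
            (((U ℝ (n : ℤ)).continuous.pow 2).intervalIntegrable _ _)
            ((U ℝ (2 * (n : ℤ) + 2)).continuous.intervalIntegrable _ _)
      _ = ∑ k ∈ Finset.range (n + 2), (1 : ℝ) / (2 * k + 1) := by
          rw [ih, int_U]
          have e2 : n + 2 = (n + 1) + 1 := rfl
          rw [e2, Finset.sum_range_succ _ (n + 1)]
          push_cast; ring

lemma main_int (m : ℕ) :
    ∫ x in (0 : ℝ)..1, ((gegenbauer2 m).eval x) ^ 2
      = ((m : ℝ) + 2) ^ 4 / 16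
        + ((4 * ((m : ℝ) + 2) ^ 2 - 1) / 32) * (∑ k ∈ Finset.range (m + 2), (1 : ℝ) / (2 * k + 1))
        - (5 / 32) * ((m : ℝ) + 2) ^ 2 := by
  induction m using Nat.twoStepInduction with
  | zero =>
    have hev : ∀ x : ℝ, (gegenbauer2 0).eval x = 1 := by
      intro x
      show (C (1/2 : ℝ) * derivative (U ℝ ((0 : ℤ) + 1))).eval x = 1
      norm_num [U_one, derivative_mul]
    simp only [hev, one_pow]
    rw [integral_one]
    rw [Finset.sum_range_succ, Finset.sum_range_one]
    norm_num
  | one =>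
    have hev : ∀ x : ℝ, (gegenbauer2 1).eval x = 4 * x := by
      intro x
      show (C (1/2 : ℝ) * derivative (U ℝ ((1 : ℤ) + 1))).eval x = 4 * x
      norm_num [show ((1:ℤ)+1) = 2 by ring, U_two, derivative_sub, derivative_mul,
        derivative_X_pow]
      ring
    simp only [hev, mul_pow]
    rw [intervalIntegral.integral_const_mul, integral_pow]
    rw [Finset.sum_range_succ, Finset.sum_range_succ, Finset.sum_range_one]
    norm_num
  | more m ih _ =>
    -- polynomial identities
    have hT2 : U ℝ ((m : ℤ) + 3) = U ℝ ((m : ℤ) + 1) + 2 * T ℝ ((m : ℤ) + 3) := by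
      have h1 := U_eq_X_mul_U_add_T ℝ ((m : ℤ) + 2)
      have h2 := U_sub_one ℝ ((m : ℤ) + 2)
      linear_combination (norm := ring_nf) 2 * h1 - h2
    have hd : derivative (T ℝ ((m : ℤ) + 3)) = (((m : ℤ) + 3 : ℤ) : ℝ[X]) * U ℝ ((m : ℤ) + 2) := by
      have h := T_derivative_eq_U (R := ℝ) ((m : ℤ) + 3)
      have e : (m : ℤ) + 3 - 1 = (m : ℤ) + 2 := by ring
      rw [h, e]
    have hdT := congrArg derivative hT2
    simp only [derivative_add, derivative_mul, derivative_ofNat, zero_mul, zero_add, hd] at hdT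
    push_cast at hdT
    have hrec := congrArg derivative (U_add_two ℝ ((m : ℤ) + 1))
    simp only [derivative_sub, derivative_mul, derivative_ofNat, derivative_X, zero_mul,
      zero_add, mul_one] at hrec
    have hxu : derivative (X * (U ℝ ((m : ℤ) + 2)) ^ 2)
        = (U ℝ ((m : ℤ) + 2)) ^ 2
          + X * (2 * U ℝ ((m : ℤ) + 2) * derivative (U ℝ ((m : ℤ) + 2))) := by
      rw [derivative_mul, derivative_X, derivative_pow]
      simp only [Nat.cast_ofNat, map_ofNat, one_mul, pow_one]
      ring
    have hpoly : (derivative (U ℝ ((m : ℤ) + 3))) ^ 2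
        = (derivative (U ℝ ((m : ℤ) + 1))) ^ 2
          + (2 * ((m : ℕ) : ℝ[X]) + 6)
              * ((U ℝ ((m : ℤ) + 2)) ^ 2 + derivative (X * (U ℝ ((m : ℤ) + 2)) ^ 2)) := by
      linear_combination (norm := ring_nf)
        (derivative (U ℝ ((m : ℤ) + 3)) + derivative (U ℝ ((m : ℤ) + 1))) * hdT
        + (2 * ((m : ℕ) : ℝ[X]) + 6) * U ℝ ((m : ℤ) + 2) * hrec
        - (2 * ((m : ℕ) : ℝ[X]) + 6) * hxu
    -- pointwise version of integrand
    have gev : ∀ (k : ℕ) (x : ℝ), ((gegenbauer2 k).eval x) ^ 2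
        = (1 / 4) * ((derivative (U ℝ ((k : ℤ) + 1))).eval x) ^ 2 := by
      intro k x
      show ((C (1/2 : ℝ) * derivative (U ℝ ((k : ℤ) + 1))).eval x) ^ 2 = _
      rw [eval_mul, eval_C]; ring
    have c2 : ((m + 2 : ℕ) : ℤ) + 1 = (m : ℤ) + 3 := by push_cast; ring
    have c22 : ((m + 2 : ℕ) : ℤ) = (m : ℤ) + 2 := by push_cast; ring
    -- integrability
    have hint : ∀ p : ℝ[X], IntervalIntegrable (fun x => p.eval x) volume (0 : ℝ) 1 :=
      fun p => p.continuous.intervalIntegrable _ _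
    have hU2 : ∫ x in (0 : ℝ)..1, ((U ℝ ((m : ℤ) + 2)).eval x) ^ 2
        = ∑ k ∈ Finset.range (m + 3), (1 : ℝ) / (2 * k + 1) := by
      rw [← c22]; exact U_sq (m + 2)
    have hD2 : ∫ x in (0 : ℝ)..1, (derivative (X * (U ℝ ((m : ℤ) + 2)) ^ 2)).eval x
        = ((m : ℝ) + 3) ^ 2 := by
      rw [poly_ftc]
      simp only [eval_mul, eval_pow, eval_X, eval_zero, eval_one, zero_mul, one_mul, sub_zero]
      rw [← c22, U_eval_one (m + 2)]
      push_cast; ring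
    have pointwise : ∀ x : ℝ, ((derivative (U ℝ ((m : ℤ) + 3))).eval x) ^ 2
        = ((derivative (U ℝ ((m : ℤ) + 1))).eval x) ^ 2
          + (2 * (m : ℝ) + 6) * (((U ℝ ((m : ℤ) + 2)).eval x) ^ 2
            + (derivative (X * (U ℝ ((m : ℤ) + 2)) ^ 2)).eval x) := by
      intro x
      have := congrArg (eval x) hpoly
      simpa [eval_pow, eval_add, eval_mul, eval_natCast] using this
    have key : ∫ x in (0 : ℝ)..1, ((derivative (U ℝ ((m : ℤ) + 3))).eval x) ^ 2
        = (∫ x in (0 : ℝ)..1, ((derivative (U ℝ ((m : ℤ) + 1))).eval x) ^ 2)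
          + (2 * (m : ℝ) + 6)
            * ((∑ k ∈ Finset.range (m + 3), (1 : ℝ) / (2 * k + 1)) + ((m : ℝ) + 3) ^ 2) := by
      rw [intervalIntegral.integral_congr (g := fun x =>
          ((derivative (U ℝ ((m : ℤ) + 1))).eval x) ^ 2
            + (2 * (m : ℝ) + 6) * (((U ℝ ((m : ℤ) + 2)).eval x) ^ 2
              + (derivative (X * (U ℝ ((m : ℤ) + 2)) ^ 2)).eval x))
          (fun x _ => pointwise x)]
      rw [intervalIntegral.integral_add (f := fun x => ((derivative (U ℝ ((m : ℤ) + 1))).eval x) ^ 2)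
          (g := fun x => (2 * (m : ℝ) + 6) * (((U ℝ ((m : ℤ) + 2)).eval x) ^ 2
            + (derivative (X * (U ℝ ((m : ℤ) + 2)) ^ 2)).eval x))
          (((derivative (U ℝ ((m : ℤ) + 1))).continuous.pow 2).intervalIntegrable _ _)
          (((((U ℝ ((m : ℤ) + 2)).continuous.pow 2).add
            (derivative (X * (U ℝ ((m : ℤ) + 2)) ^ 2)).continuous).intervalIntegrable
              (μ := volume) (0 : ℝ) 1).const_mul _),
        intervalIntegral.integral_const_mul,
        intervalIntegral.integral_add (f := fun x => ((U ℝ ((m : ℤ) + 2)).eval x) ^ 2)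
          (g := fun x => (derivative (X * (U ℝ ((m : ℤ) + 2)) ^ 2)).eval x)
          (((U ℝ ((m : ℤ) + 2)).continuous.pow 2).intervalIntegrable _ _)
          ((derivative (X * (U ℝ ((m : ℤ) + 2)) ^ 2)).continuous.intervalIntegrable _ _),
        hU2, hD2]
    have lhs_eq : ∫ x in (0 : ℝ)..1, ((gegenbauer2 (m + 2)).eval x) ^ 2
        = (1 / 4) * ∫ x in (0 : ℝ)..1, ((derivative (U ℝ ((m : ℤ) + 3))).eval x) ^ 2 := by
      rw [← intervalIntegral.integral_const_mul]
      apply intervalIntegral.integral_congr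
      intro x _
      show ((gegenbauer2 (m + 2)).eval x) ^ 2
        = 1 / 4 * ((derivative (U ℝ ((m : ℤ) + 3))).eval x) ^ 2
      rw [gev (m + 2) x, c2]
    have lhs_eq0 : ∫ x in (0 : ℝ)..1, ((gegenbauer2 m).eval x) ^ 2
        = (1 / 4) * ∫ x in (0 : ℝ)..1, ((derivative (U ℝ ((m : ℤ) + 1))).eval x) ^ 2 := by
      rw [← intervalIntegral.integral_const_mul]
      apply intervalIntegral.integral_congr
      intro x _
      show ((gegenbauer2 m).eval x) ^ 2
        = 1 / 4 * ((derivative (U ℝ ((m : ℤ) + 1))).eval x) ^ 2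
      rw [gev m x]
    rw [lhs_eq, key]
    rw [lhs_eq0] at ih
    have hIH : ∫ x in (0 : ℝ)..1, ((derivative (U ℝ ((m : ℤ) + 1))).eval x) ^ 2
        = 4 * (((m : ℝ) + 2) ^ 4 / 16
          + ((4 * ((m : ℝ) + 2) ^ 2 - 1) / 32)
              * (∑ k ∈ Finset.range (m + 2), (1 : ℝ) / (2 * k + 1))
          - (5 / 32) * ((m : ℝ) + 2) ^ 2) := by linarith [ih]
    have e4 : m + 2 + 2 = (m + 3) + 1 := by omega
    have e3 : m + 3 = (m + 2) + 1 := by omega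
    have hS3 : (∑ k ∈ Finset.range (m + 3), (1 : ℝ) / (2 * k + 1))
        = (∑ k ∈ Finset.range (m + 2), (1 : ℝ) / (2 * k + 1)) + 1 / (2 * ((m : ℝ) + 2) + 1) := by
      rw [e3, Finset.sum_range_succ]; push_cast; ring
    have hS4 : (∑ k ∈ Finset.range (m + 2 + 2), (1 : ℝ) / (2 * k + 1))
        = (∑ k ∈ Finset.range (m + 2), (1 : ℝ) / (2 * k + 1)) + 1 / (2 * ((m : ℝ) + 2) + 1)
          + 1 / (2 * ((m : ℝ) + 3) + 1) := by
      rw [e4, Finset.sum_range_succ, e3, Finset.sum_range_succ]; push_cast; ring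
    rw [hIH, hS3, hS4]
    have h5 : (2 * ((m : ℝ) + 2) + 1) ≠ 0 := by positivity
    have h7 : (2 * ((m : ℝ) + 3) + 1) ≠ 0 := by positivity
    push_cast
    field_simp
    ring


end GegenbauerAux

open GegenbauerAux in
theorem integral_gegenbauer2_sq (n : ℕ) (hn : 2 ≤ n) :
    (∫ x in (0 : ℝ)..1, ((gegenbauer2 (n - 2)).eval x) ^ 2)
      = (n : ℝ) ^ 4 / 16
        + ((4 * (n : ℝ) ^ 2 - 1) / 64)
            * (digamma ((n : ℝ) + 1 / 2) + Real.eulerMascheroniConstant + Real.log 4)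
        - (5 / 32) * (n : ℝ) ^ 2 := by
  obtain ⟨m, rfl⟩ : ∃ m, n = m + 2 := ⟨n - 2, by omega⟩
  have h2 := digamma_nat_half (m + 2)
  rw [Nat.add_sub_cancel, main_int m, h2]
  push_cast
  ring
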